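/- Let $u$ be a continuous solution of EVI$_\lambda$ with $\lambda\le0$ and $u_0\in\mathrm{Dom}(|\partial\phi|)$. Then for every $v\in\mathrm{Dom}\phi$ and $t\ge0$: $\frac{e^{2\lambda t}}2 d(u_t,v)^2-\frac12 d(u_0,v)^2\le \mathsf E_{2\lambda}(t)(\phi(v)-\phi(u_0))+\frac{t^2}2|\partial\phi|^2(u_0)$. -/

import Mathlib

set_option maxHeartbeats 1000000

open Filter in
/-- The metric slope `|∂φ|(x)` of an extended-real functional. -/
noncomputable def metricSlope {X : Type*} [MetricSpace X] (φ : X → EReal) (x : X) : EReal :=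
  if φ x = ⊤ then ⊤ else
    max 0 (Filter.limsup (fun y => (max (φ x - φ y) 0) / ((dist x y : ℝ) : EReal))
      (nhdsWithin x {x}ᶜ))

/-- The global `λ`-slope `|∂^λ φ|(x)`. -/
noncomputable def globalSlope {X : Type*} [MetricSpace X] (φ : X → EReal) (lam : ℝ) (x : X) :
    EReal :=
  if φ x = ⊤ then ⊤ else
    max 0 (⨆ y ∈ {y : X | y ≠ x},
      (max (φ x - φ y + ((lam / 2 * dist x y ^ 2 : ℝ) : EReal)) 0) / ((dist x y : ℝ) : EReal))

/-- Upper right Dini derivative, with values in `EReal`. -/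
noncomputable def upperDiniDeriv (f : ℝ → ℝ) (t : ℝ) : EReal :=
  Filter.limsup (fun h => (((f (t + h) - f t) / h : ℝ) : EReal)) (nhdsWithin 0 (Set.Ioi 0))

/-- `E_λ(t) = ∫₀ᵗ e^{λ r} dr`. -/
noncomputable def Elam (lam t : ℝ) : ℝ :=
  if lam = 0 then t else (Real.exp (lam * t) - 1) / lam

/-- The pointwise `EVI_λ` differential inequality at time `t`. -/
noncomputable def EVIineq {X : Type*} [MetricSpace X]
    (φ : X → EReal) (lam : ℝ) (u : ℝ → X) (t : ℝ) : Prop :=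
  ∀ v : X, φ v ≠ ⊤ →
    ((1 / 2 : ℝ) : EReal) * upperDiniDeriv (fun s => dist (u s) v ^ 2) t +
      ((lam / 2 * dist (u t) v ^ 2 : ℝ) : EReal) ≤ φ v - φ (u t)

/-- A solution of `EVI_λ` on `(0, ∞)`: a continuous curve with values in `Dom φ`
satisfying the `EVI_λ` differential inequality. -/
noncomputable def IsEVISolution {X : Type*} [MetricSpace X]
    (φ : X → EReal) (lam : ℝ) (u : ℝ → X) : Prop :=
  ContinuousOn u (Set.Ioi 0) ∧ (∀ t ∈ Set.Ioi (0:ℝ), φ (u t) ≠ ⊤) ∧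
  ∀ t ∈ Set.Ioi (0:ℝ), EVIineq φ lam u t

open Filter Set Real

lemma Elam_zero (c : ℝ) : Elam c 0 = 0 := by
  unfold Elam; split <;> simp

lemma mul_Elam (c t : ℝ) : c * Elam c t = Real.exp (c * t) - 1 := by
  unfold Elam; split
  · simp [*]
  · field_simp

lemma hasDerivAt_Elam (c t : ℝ) : HasDerivAt (Elam c) (Real.exp (c * t)) t := by
  unfold Elam
  split
  · subst c; exact (hasDerivAt_id' t).congr_deriv (by simp)
  · have h1 : HasDerivAt (fun t => Real.exp (c*t)) (c * Real.exp (c*t)) t := by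
      simpa [Function.comp_def, mul_comm] using (Real.hasDerivAt_exp (c*t)).comp t ((hasDerivAt_id t).const_mul c)
    have := (h1.sub_const 1).div_const c
    simpa [mul_div_assoc, mul_comm, mul_div_cancel_left₀ _ (by assumption : c ≠ 0)] using this

lemma Elam_nonneg {c t : ℝ} (ht : 0 ≤ t) : 0 ≤ Elam c t := by
  unfold Elam; split
  · exact ht
  · rcases lt_or_gt_of_ne (by assumption : c ≠ 0) with hc | hc
    · apply div_nonneg_iff.2
      refine Or.inr ⟨?_, hc.le⟩
      simp only [sub_nonpos]
      exact Real.exp_le_one_iff.2 (mul_nonpos_of_nonpos_of_nonneg hc.le ht)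
    · apply div_nonneg _ hc.le
      simp only [sub_nonneg, Real.one_le_exp_iff]
      positivity

lemma Elam_mono {c : ℝ} (hc : 0 ≤ c) : Monotone (Elam c) := by
  have : ∀ t, 0 ≤ Real.exp (c * t) := fun t => (Real.exp_pos _).le
  exact monotone_of_deriv_nonneg
    (fun t => (hasDerivAt_Elam c t).differentiableAt)
    (fun t => by rw [(hasDerivAt_Elam c t).deriv]; exact this t)

lemma key_exp_ineq {x : ℝ} (hx : 0 ≤ x) :
    (Real.exp x - 1) + (Real.exp x - 1)^2/2 ≤ x * Real.exp (2*x) := by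
  set g : ℝ → ℝ := fun x => x * Real.exp (2*x) - (Real.exp x - 1) - (Real.exp x - 1)^2/2 with hg
  have hder : ∀ y, HasDerivAt g (2*y*Real.exp (2*y)) y := by
    intro y
    have he2 : HasDerivAt (fun t => Real.exp (2*t)) (2 * Real.exp (2*y)) y := by
      simpa [Function.comp_def, mul_comm] using (Real.hasDerivAt_exp (2*y)).comp y ((hasDerivAt_id y).const_mul 2)
    have h1 : HasDerivAt (fun t => t * Real.exp (2*t))
        (1 * Real.exp (2*y) + y * (2*Real.exp (2*y))) y := (hasDerivAt_id y).mul he2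
    have h2 : HasDerivAt (fun t => Real.exp t - 1) (Real.exp y) y :=
      (Real.hasDerivAt_exp y).sub_const 1
    have h3 : HasDerivAt (fun t => (Real.exp t - 1)^2/2) ((Real.exp y -1) * Real.exp y) y := by
      have := (h2.pow 2).div_const 2
      simpa [mul_comm, mul_assoc, mul_div_assoc] using this
    have := (h1.sub h2).sub h3
    refine this.congr_deriv ?_; symm
    have : Real.exp (2*y) = Real.exp y * Real.exp y := by
      rw [← Real.exp_add]; ring_nf
    rw [this]; ring
  have hmono : MonotoneOn g (Set.Ici 0) := by
    apply monotoneOn_of_deriv_nonneg (convex_Ici 0)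
      (Continuous.continuousOn (by fun_prop))
      (fun y _ => (hder y).differentiableAt.differentiableWithinAt)
    intro y hy
    rw [(hder y).deriv]
    rw [interior_Ici, mem_Ioi] at hy
    positivity
  have := hmono (le_refl (0:ℝ)) hx hx
  simp only [hg] at this
  simp at this
  linarith

lemma Elam_sq_ineq {mu r : ℝ} (hmu : 0 ≤ mu) (hr : 0 ≤ r) :
    Elam mu r + mu/2 * (Elam mu r)^2 ≤ r * Real.exp (2*mu*r) := by
  rcases eq_or_lt_of_le hmu with h | h
  · rw [← h]; simp [Elam]
  · have hE : Elam mu r = (Real.exp (mu*r) - 1)/mu := by unfold Elam; rw [if_neg h.ne']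
    have hx : 0 ≤ mu * r := by positivity
    have := key_exp_ineq hx
    rw [hE]
    have h2 : 2*(mu*r) = 2*mu*r := by ring
    rw [h2] at this
    have hmu' : mu ≠ 0 := h.ne'
    have h3 : (Real.exp (mu*r) - 1)/mu + mu/2*((Real.exp (mu*r)-1)/mu)^2
        = ((Real.exp (mu*r) - 1) + (Real.exp (mu*r)-1)^2/2)/mu := by
      field_simp
    rw [h3, div_le_iff₀ h]
    nlinarith [this]


section Aux
variable {X : Type*} [MetricSpace X] {φ : X → EReal} {lam : ℝ} {u : ℝ → X}

lemma dini_bound (hbot : ∀ y, φ y ≠ ⊥) (hEVI : IsEVISolution φ lam u)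
    {v : X} (hv : φ v ≠ ⊤) {x : ℝ} (hx : 0 < x) {r : ℝ}
    (hr : 2 * ((φ v).toReal - (φ (u x)).toReal) - lam * dist (u x) v ^ 2 < r) :
    ∃ᶠ z in nhdsWithin x (Set.Ioi x), slope (fun s => dist (u s) v ^ 2) x z < r := by
  have hux : φ (u x) ≠ ⊤ := hEVI.2.1 x hx
  set A := (φ v).toReal with hA
  set Bx := (φ (u x)).toReal with hBx
  have hv' : φ v = (A : EReal) := (EReal.coe_toReal hv (hbot v)).symm
  have hux' : φ (u x) = (Bx : EReal) := (EReal.coe_toReal hux (hbot (u x))).symm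
  set g : ℝ → ℝ := fun s => dist (u s) v ^ 2 with hg
  have hevi := hEVI.2.2 x hx v hv
  rw [hv', hux', ← EReal.coe_sub] at hevi
  set U := upperDiniDeriv g x with hU
  clear_value U
  have hUle : U ≤ (((2*(A - Bx) - lam * dist (u x) v ^ 2 : ℝ)) : EReal) := by
    clear hU
    revert hevi
    induction U using EReal.rec with
    | bot => exact fun _ => bot_le
    | coe w =>
        intro hevi
        rw [show ((1/2:ℝ) : EReal) * (w : EReal) = (((1/2) * w : ℝ) : EReal) from
          (EReal.coe_mul _ _).symm, ← EReal.coe_add, EReal.coe_le_coe_iff] at hevi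
        rw [EReal.coe_le_coe_iff]
        linarith
    | top =>
        intro hevi
        exfalso
        rw [show ((1/2:ℝ) : EReal) * (⊤ : EReal) = (⊤ : EReal) from
          EReal.coe_mul_top_of_pos (by norm_num), EReal.top_add_coe] at hevi
        exact (EReal.coe_lt_top _).not_ge hevi
  have hUlt : U < ((r : ℝ) : EReal) := lt_of_le_of_lt hUle (by exact_mod_cast hr)
  rw [hU] at hUlt
  unfold upperDiniDeriv at hUlt
  have hev : ∀ᶠ h in nhdsWithin 0 (Set.Ioi 0), (g (x + h) - g x) / h < r := by
    have := eventually_lt_of_limsup_lt hUlt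
    filter_upwards [this] with h hh
    exact_mod_cast hh
  have hmap : Filter.Tendsto (fun z => z - x) (nhdsWithin x (Set.Ioi x))
      (nhdsWithin 0 (Set.Ioi 0)) := by
    apply tendsto_nhdsWithin_of_tendsto_nhds_of_eventually_within
    · have h0 : Filter.Tendsto (fun z : ℝ => z - x) (nhds x) (nhds (x - x)) :=
        (continuous_sub_right x).tendsto x
      rw [sub_self] at h0
      exact h0.mono_left nhdsWithin_le_nhds
    · exact eventually_mem_nhdsWithin.mono (fun z hz => Set.mem_Ioi.2 (sub_pos.2 hz))
  apply Filter.Eventually.frequently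
  filter_upwards [hmap.eventually hev, eventually_mem_nhdsWithin] with z hz hz'
  rw [show x + (z - x) = z from by ring] at hz
  rw [slope_def_field]
  exact hz

lemma gronW (hbot : ∀ y, φ y ≠ ⊥)
    (hcont : ContinuousOn u (Set.Ici 0)) (hEVI : IsEVISolution φ lam u)
    {ν : ℝ} (hν : ν ≤ lam) {v : X} (hv : φ v ≠ ⊤)
    {a b : ℝ} (ha : 0 ≤ a) (hab : a ≤ b)
    {h H H' : ℝ → ℝ}
    (hh : ∀ t ∈ Set.Ioo a b, h t ≤ (φ (u t)).toReal)
    (hH : ∀ t, HasDerivAt H (H' t) t)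
    (hH' : ∀ t ∈ Set.Icc a b, Real.exp (ν * t) * ((φ v).toReal - h t) ≤ H' t) :
    Real.exp (ν * b) * dist (u b) v ^ 2 ≤
      Real.exp (ν * a) * dist (u a) v ^ 2 + 2 * (H b - H a) := by
  rcases eq_or_lt_of_le hab with rfl | hab'
  · simp
  set g : ℝ → ℝ := fun t => dist (u t) v ^ 2 with hg
  have key : ∀ α ∈ Set.Ioo a b, ∀ ε > (0:ℝ),
      Real.exp (ν*b) * g b ≤ Real.exp (ν*α) * g α + 2*(H b - H α) + ε * (b - α) := by
    intro α hα ε hε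
    have hα0 : 0 < α := lt_of_le_of_lt ha hα.1
    set B : ℝ → ℝ := fun t =>
      Real.exp (-(ν*t)) * (Real.exp (ν*α) * g α + 2*(H t - H α) + ε*(t-α)) with hB
    set B' : ℝ → ℝ := fun t =>
      -ν * B t + Real.exp (-(ν*t)) * (2 * H' t + ε) with hB'def
    set f' : ℝ → ℝ := fun x => 2*((φ v).toReal - (φ (u x)).toReal) - ν * g x with hf'def
    have hBd : ∀ t, HasDerivAt B (B' t) t := by
      intro t
      have he : HasDerivAt (fun t => Real.exp (-(ν*t))) (-ν * Real.exp (-(ν*t))) t := by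
        simpa [Function.comp_def, mul_comm, neg_mul] using
          (Real.hasDerivAt_exp (-ν*t)).comp t ((hasDerivAt_id t).const_mul (-ν))
      have hin : HasDerivAt (fun t => Real.exp (ν*α) * g α + 2*(H t - H α) + ε*(t-α))
          (2 * H' t + ε) t := by
        have h1 : HasDerivAt (fun t => 2*(H t - H α)) (2 * H' t) t :=
          ((hH t).sub_const (H α)).const_mul 2
        have h2 : HasDerivAt (fun t : ℝ => ε*(t-α)) ε t := by
          simpa using ((hasDerivAt_id t).sub_const α).const_mul ε
        simpa [add_assoc] using ((h1.add h2).const_add (Real.exp (ν*α) * g α))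
      have := he.mul hin
      refine this.congr_deriv ?_; symm
      simp only [hB'def, hB]
      ring
    have hsub : Set.Icc α b ⊆ Set.Ici (0:ℝ) := fun x hx => le_trans hα0.le hx.1
    have cont : ContinuousOn g (Set.Icc α b) :=
      (((continuous_id.dist continuous_const).comp_continuousOn (hcont.mono hsub)).pow 2)
    have hf'cond : ∀ x ∈ Set.Ico α b, ∀ r, f' x < r →
        ∃ᶠ z in nhdsWithin x (Set.Ioi x), slope g x z < r := by
      intro x hx r hr
      apply dini_bound hbot hEVI hv (lt_of_lt_of_le hα0 hx.1)
      have hgx : (0:ℝ) ≤ g x := by positivity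
      have hmul := mul_le_mul_of_nonneg_right hν hgx
      have : 2*((φ v).toReal - (φ (u x)).toReal) - lam * dist (u x) v ^ 2 ≤ f' x := by
        simp only [hf'def]
        have : lam * g x = lam * dist (u x) v ^2 := rfl
        linarith [hmul]
      linarith
    have haB : g α ≤ B α := by
      have h1 : Real.exp (-(ν*α)) * Real.exp (ν*α) = 1 := by rw [← Real.exp_add]; simp
      show g α ≤ Real.exp (-(ν*α)) * (Real.exp (ν*α) * g α + 2*(H α - H α) + ε*(α-α))
      rw [sub_self, sub_self, mul_zero, mul_zero, add_zero, add_zero, ← mul_assoc, h1, one_mul]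
    have bound : ∀ x ∈ Set.Ico α b, g x = B x → f' x < B' x := by
      intro x hx hfB
      have hhx : h x ≤ (φ (u x)).toReal := hh x ⟨lt_of_lt_of_le hα.1 hx.1, hx.2⟩
      have hexp : (0:ℝ) < Real.exp (-(ν*x)) := Real.exp_pos _
      have hH'x := hH' x ⟨le_trans hα.1.le hx.1, hx.2.le⟩
      have h1 : (φ v).toReal - h x ≤ Real.exp (-(ν*x)) * H' x := by
        have h2 := mul_le_mul_of_nonneg_left hH'x hexp.le
        rwa [← mul_assoc, (by rw [← Real.exp_add]; simp : Real.exp (-(ν*x)) * Real.exp (ν*x) = 1),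
          one_mul] at h2
      simp only [hf'def, hB'def]
      rw [hfB]
      have h3 : Real.exp (-(ν*x))*(2*H' x + ε) = 2*(Real.exp (-(ν*x))*H' x) + Real.exp (-(ν*x))*ε := by
        ring
      nlinarith [mul_pos hexp hε]
    have main := image_le_of_liminf_slope_right_lt_deriv_boundary cont hf'cond haB hBd bound
    have hb' : g b ≤ B b := main (right_mem_Icc.2 hα.2.le)
    have h2 : Real.exp (ν*b) * B b = Real.exp (ν*α) * g α + 2*(H b - H α) + ε*(b-α) := by
      simp only [hB]
      rw [← mul_assoc, (by rw [← Real.exp_add]; simp : Real.exp (ν*b) * Real.exp (-(ν*b)) = 1),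
        one_mul]
    calc Real.exp (ν*b) * g b ≤ Real.exp (ν*b) * B b :=
          mul_le_mul_of_nonneg_left hb' (Real.exp_pos _).le
      _ = _ := h2
  have key2 : ∀ α ∈ Set.Ioo a b,
      Real.exp (ν*b) * g b ≤ Real.exp (ν*α) * g α + 2*(H b - H α) := by
    intro α hα
    apply le_of_forall_pos_le_add
    intro ε hε
    have hba : (0:ℝ) < b - α := sub_pos.2 hα.2
    have := key α hα (ε/(b-α)) (div_pos hε hba)
    rwa [div_mul_cancel₀ _ hba.ne'] at this
  have hten : Filter.Tendsto (fun α => Real.exp (ν*α) * g α + 2*(H b - H α))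
      (nhdsWithin a (Set.Ioi a)) (nhds (Real.exp (ν*a) * g a + 2*(H b - H a))) := by
    apply Filter.Tendsto.add
    · apply Filter.Tendsto.mul
      · exact ((Real.continuous_exp.comp (continuous_const.mul continuous_id)).tendsto a).mono_left
          nhdsWithin_le_nhds
      · have hg0 : ContinuousWithinAt g (Set.Ici 0) a :=
          (((hcont a ha).dist continuousWithinAt_const).pow 2)
        exact hg0.tendsto.mono_left (nhdsWithin_mono a (fun z hz => le_trans ha (le_of_lt hz)))
    · exact ((tendsto_const_nhds.sub (hH a).continuousAt.tendsto).const_mul 2).mono_left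
        nhdsWithin_le_nhds
  exact ge_of_tendsto hten (by
    filter_upwards [Ioo_mem_nhdsGT_of_mem ⟨le_rfl, hab'⟩] with α hα using key2 α hα)

lemma slope_ne_bot {x : X} : metricSlope φ x ≠ ⊥ := by
  have hS0 : (0:EReal) ≤ metricSlope φ x := by
    unfold metricSlope; split
    · exact le_top
    · exact le_max_left _ _
  exact ne_of_gt (lt_of_lt_of_le EReal.bot_lt_zero hS0)

lemma slope_toReal_nonneg {x : X} : 0 ≤ (metricSlope φ x).toReal := by
  have hS0 : (0:EReal) ≤ metricSlope φ x := by
    unfold metricSlope; split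
    · exact le_top
    · exact le_max_left _ _
  rcases eq_or_ne (metricSlope φ x) ⊤ with h | h
  · rw [h]; simp [EReal.toReal_top]
  · have := EReal.toReal_le_toReal hS0 (by simp) h
    simpa using this

lemma phi_ne_top_of_slope {x : X} (hx : metricSlope φ x ≠ ⊤) : φ x ≠ ⊤ := by
  intro h
  exact hx (by unfold metricSlope; rw [if_pos h])

lemma local_slope (hbot : ∀ y, φ y ≠ ⊥) {x : X} (hx : metricSlope φ x ≠ ⊤)
    {ε : ℝ} (hε : 0 < ε) :
    ∃ δ > 0, ∀ y, φ y ≠ ⊤ → dist x y < δ →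
      (φ x).toReal - (φ y).toReal ≤ ((metricSlope φ x).toReal + ε) * dist x y := by
  have hxt : φ x ≠ ⊤ := phi_ne_top_of_slope hx
  set S := (metricSlope φ x).toReal with hS
  have hcoe : metricSlope φ x = (S : EReal) := (EReal.coe_toReal hx slope_ne_bot).symm
  have hLle : Filter.limsup (fun y => (max (φ x - φ y) 0) / ((dist x y : ℝ) : EReal))
      (nhdsWithin x {x}ᶜ) < ((S + ε : ℝ) : EReal) := by
    have h1 : Filter.limsup (fun y => (max (φ x - φ y) 0) / ((dist x y : ℝ) : EReal))
        (nhdsWithin x {x}ᶜ) ≤ metricSlope φ x := by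
      unfold metricSlope; rw [if_neg hxt]; exact le_max_right _ _
    refine lt_of_le_of_lt (hcoe ▸ h1) ?_
    exact_mod_cast lt_add_of_pos_right S hε
  have hev := eventually_lt_of_limsup_lt hLle
  obtain ⟨δ, hδ, hball⟩ := Metric.mem_nhdsWithin_iff.1 hev
  refine ⟨δ, hδ, ?_⟩
  intro y hy hdist
  have hSε : 0 ≤ S + ε := by have := slope_toReal_nonneg (φ := φ) (x := x); linarith
  rcases eq_or_ne y x with rfl | hne
  · simp only [dist_self, mul_zero, sub_self, le_refl]
  · have hy' : (max (φ x - φ y) 0) / ((dist x y : ℝ) : EReal) < ((S+ε:ℝ):EReal) :=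
      hball ⟨Metric.mem_ball.2 (by rwa [dist_comm] at hdist), hne⟩
    have hphiy : φ y = (((φ y).toReal : ℝ) : EReal) := (EReal.coe_toReal hy (hbot y)).symm
    have hphix : φ x = (((φ x).toReal :ℝ):EReal) := (EReal.coe_toReal hxt (hbot x)).symm
    rw [hphix, hphiy, ← EReal.coe_sub,
      (by simp : (0:EReal) = ((0:ℝ):EReal)),
      ← Monotone.map_max (EReal.coe_strictMono.monotone), ← EReal.coe_div,
      EReal.coe_lt_coe_iff] at hy'
    have hd : 0 < dist x y := dist_pos.2 (Ne.symm hne)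
    have h2 : max ((φ x).toReal - (φ y).toReal) 0 < (S+ε) * dist x y := by
      rwa [div_lt_iff₀ hd] at hy'
    exact le_trans (le_max_left _ _) h2.le

lemma locSpeed (hlam : lam ≤ 0) (hbot : ∀ y, φ y ≠ ⊥)
    (hcont : ContinuousOn u (Set.Ici 0)) (hEVI : IsEVISolution φ lam u)
    (hu0 : metricSlope φ (u 0) ≠ ⊤) {ε : ℝ} (hε : 0 < ε) :
    ∃ r₁ > 0, r₁ ≤ ε ∧
      (∀ t ∈ Set.Icc (0:ℝ) r₁,
        dist (u t) (u 0) ≤ ((metricSlope φ (u 0)).toReal + ε) * Real.exp (-lam * r₁) * t) ∧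
      (∀ t ∈ Set.Icc (0:ℝ) r₁,
        (φ (u 0)).toReal - (φ (u t)).toReal ≤
          ((metricSlope φ (u 0)).toReal + ε) * dist (u t) (u 0)) := by
  have hψtop : φ (u 0) ≠ ⊤ := phi_ne_top_of_slope hu0
  obtain ⟨δ, hδ, hloc⟩ := local_slope hbot hu0 hε
  set S := (metricSlope φ (u 0)).toReal with hSdef
  have hS0 : 0 ≤ S := slope_toReal_nonneg
  have hSε : 0 < S + ε := by linarith
  -- find r₁
  obtain ⟨r₁, hr₁, hr₁ε, hsmall⟩ : ∃ r₁ > 0, r₁ ≤ ε ∧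
      ∀ t ∈ Set.Icc (0:ℝ) r₁, dist (u t) (u 0) < δ := by
    have hc0 : ContinuousWithinAt (fun t => dist (u t) (u 0)) (Set.Ici 0) 0 :=
      ((continuous_id.dist continuous_const).continuousAt).comp_continuousWithinAt
        (hcont 0 (Set.mem_Ici.2 le_rfl))
    have hev : ∀ᶠ t in nhdsWithin 0 (Set.Ici 0), dist (u t) (u 0) < δ := by
      have := hc0.tendsto
      rw [dist_self] at this
      exact this.eventually (Filter.Tendsto.eventually_lt_const hδ tendsto_id)
    obtain ⟨η, hη, hball⟩ := Metric.mem_nhdsWithin_iff.1 hev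
    refine ⟨min (η/2) ε, by positivity, min_le_right _ _, ?_⟩
    intro t ht
    apply hball
    constructor
    · rw [Metric.mem_ball, Real.dist_eq, sub_zero, abs_of_nonneg ht.1]
      exact lt_of_le_of_lt (le_trans ht.2 (min_le_left _ _)) (by linarith)
    · exact ht.1
  -- slope estimate along the curve
  have hslope : ∀ t ∈ Set.Icc (0:ℝ) r₁,
      (φ (u 0)).toReal - (φ (u t)).toReal ≤ (S + ε) * dist (u t) (u 0) := by
    intro t ht
    rcases eq_or_lt_of_le ht.1 with rfl | ht0
    · simp
    · have := hloc (u t) (hEVI.2.1 t ht0) (by rw [dist_comm]; exact hsmall t ht)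
      rwa [dist_comm (u 0) (u t)] at this
  refine ⟨r₁, hr₁, hr₁ε, ?_, hslope⟩
  set e₁ := Real.exp (-lam * r₁) with he₁
  have he₁1 : 1 ≤ e₁ := Real.one_le_exp_iff.2 (by nlinarith)
  have he₁0 : 0 < e₁ := lt_of_lt_of_le one_pos he₁1
  -- the improvement step
  have step : ∀ K, 0 ≤ K → (∀ t ∈ Set.Icc (0:ℝ) r₁, dist (u t) (u 0) ≤ K * t) →
      ∀ t ∈ Set.Icc (0:ℝ) r₁, dist (u t) (u 0) ≤ Real.sqrt ((S+ε) * K * e₁) * t := by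
    intro K hK hgood τ hτ
    rcases eq_or_lt_of_le hτ.1 with rfl | hτ0
    · simp
    have hW := gronW (hbot := hbot) (hcont := hcont) (hEVI := hEVI) (ν := lam) le_rfl
      hψtop (le_refl (0:ℝ)) hτ0.le
      (h := fun t => (φ (u 0)).toReal - (S+ε)*K*t)
      (H := fun t => (S+ε)*K*t^2/2) (H' := fun t => (S+ε)*K*t)
      (by
        intro t ht
        show (φ (u 0)).toReal - (S + ε) * K * t ≤ (φ (u t)).toReal
        have h1 := hslope t ⟨ht.1.le, le_trans ht.2.le hτ.2⟩
        have h2 := hgood t ⟨ht.1.le, le_trans ht.2.le hτ.2⟩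
        nlinarith [mul_le_mul_of_nonneg_left h2 hSε.le])
      (by
        intro t
        have : (fun t:ℝ => (S+ε)*K*t^2/2) = fun t => ((S+ε)*K/2)*t^2 := by funext t; ring
        rw [this]
        have := (hasDerivAt_pow 2 t).const_mul ((S+ε)*K/2)
        refine this.congr_deriv ?_; symm
        simp; ring)
      (by
        intro t ht
        show Real.exp (lam * t) * ((φ (u 0)).toReal - ((φ (u 0)).toReal - (S+ε)*K*t))
            ≤ (S+ε)*K*t
        have hexp1 : Real.exp (lam * t) ≤ 1 := Real.exp_le_one_iff.2 (by nlinarith [ht.1])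
        have heq : Real.exp (lam*t) * ((φ (u 0)).toReal - ((φ (u 0)).toReal - (S+ε)*K*t))
            = Real.exp (lam*t) * ((S+ε)*K*t) := by ring
        rw [heq]
        have h0 : 0 ≤ (S+ε)*K*t := mul_nonneg (mul_nonneg hSε.le hK) ht.1
        nlinarith [Real.exp_pos (lam*t)])
    have hW' : Real.exp (lam*τ) * dist (u τ) (u 0)^2 ≤ (S+ε)*K*τ^2 := by
      have h2 := hW
      simp only [mul_zero, dist_self, Real.exp_zero] at h2
      norm_num at h2
      linarith
    have hexpe : 1 ≤ Real.exp (lam*τ) * e₁ := by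
      rw [he₁, ← Real.exp_add]
      apply Real.one_le_exp_iff.2
      nlinarith [hτ.2]
    have hd2 : dist (u τ) (u 0)^2 ≤ (S+ε)*K*e₁*τ^2 := by
      nlinarith [mul_le_mul_of_nonneg_left hW' he₁0.le, hexpe,
        sq_nonneg (dist (u τ) (u 0))]
    have h3 : dist (u τ) (u 0) ≤ Real.sqrt ((S+ε)*K*e₁*τ^2) := by
      rw [← Real.sqrt_sq dist_nonneg]
      exact Real.sqrt_le_sqrt hd2
    calc dist (u τ) (u 0) ≤ Real.sqrt ((S+ε)*K*e₁*τ^2) := h3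
      _ = Real.sqrt ((S+ε)*K*e₁) * τ := by
          rw [Real.sqrt_mul (by positivity) (τ^2), Real.sqrt_sq hτ0.le]
  -- base estimate via sup trick
  have base : ∀ t ∈ Set.Icc (0:ℝ) r₁, dist (u t) (u 0) ≤ 2*(S+ε)*e₁ * t := by
    intro τ hτ
    rcases eq_or_lt_of_le hτ.1 with rfl | hτ0
    · simp
    set D : ℝ → ℝ := fun t => dist (u t) (u 0) with hD
    have hDcont : ContinuousOn D (Set.Icc 0 τ) :=
      (continuous_id.dist continuous_const).comp_continuousOn
        (hcont.mono (fun x hx => hx.1))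
    set ω := sSup (D '' Set.Icc 0 τ) with hω
    have hbdd : BddAbove (D '' Set.Icc 0 τ) :=
      (isCompact_Icc.image_of_continuousOn hDcont).bddAbove
    have hne : (D '' Set.Icc 0 τ).Nonempty :=
      ⟨D 0, Set.mem_image_of_mem D ⟨le_rfl, hτ0.le⟩⟩
    have hωD : ∀ σ ∈ Set.Icc (0:ℝ) τ, D σ ≤ ω :=
      fun σ hσ => le_csSup hbdd (Set.mem_image_of_mem D hσ)
    have hω0 : 0 ≤ ω := by
      have h := hωD 0 ⟨le_rfl, hτ0.le⟩
      simpa [hD] using h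
    have hWσ : ∀ σ ∈ Set.Icc (0:ℝ) τ, D σ ^ 2 ≤ e₁ * (2*(S+ε)*ω*τ) := by
      intro σ hσ
      rcases eq_or_lt_of_le hσ.1 with rfl | hσ0
      · have hD0 : D 0 = 0 := by simp [hD]
        rw [hD0]
        norm_num
        positivity
      have hW := gronW (hbot := hbot) (hcont := hcont) (hEVI := hEVI) (ν := lam) le_rfl
        hψtop (le_refl (0:ℝ)) hσ0.le
        (h := fun _ => (φ (u 0)).toReal - (S+ε)*ω)
        (H := fun t => (S+ε)*ω*t) (H' := fun _ => (S+ε)*ω)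
        (by
          intro t ht
          show (φ (u 0)).toReal - (S + ε) * ω ≤ (φ (u t)).toReal
          have h1 := hslope t ⟨ht.1.le, le_trans ht.2.le (le_trans hσ.2 hτ.2)⟩
          have h2 := hωD t ⟨ht.1.le, le_trans ht.2.le hσ.2⟩
          nlinarith [mul_le_mul_of_nonneg_left h2 hSε.le])
        (fun t => by simpa using (hasDerivAt_id t).const_mul ((S+ε)*ω))
        (by
          intro t ht
          show Real.exp (lam * t) * ((φ (u 0)).toReal - ((φ (u 0)).toReal - (S+ε)*ω))
              ≤ (S+ε)*ω
          have hexp1 : Real.exp (lam * t) ≤ 1 := Real.exp_le_one_iff.2 (by nlinarith [ht.1])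
          have heq : Real.exp (lam*t) * ((φ (u 0)).toReal - ((φ (u 0)).toReal - (S+ε)*ω))
              = Real.exp (lam*t) * ((S+ε)*ω) := by ring
          rw [heq]
          nlinarith [Real.exp_pos (lam*t), mul_nonneg hSε.le hω0])
      have hW' : Real.exp (lam*σ) * D σ ^2 ≤ 2*(S+ε)*ω*σ := by
        simp only [mul_zero, dist_self, Real.exp_zero] at hW
        norm_num at hW
        simp only [hD]
        linarith
      have hexpe : 1 ≤ Real.exp (lam*σ) * e₁ := by
        rw [he₁, ← Real.exp_add]
        apply Real.one_le_exp_iff.2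
        nlinarith [le_trans hσ.2 hτ.2]
      have hσbd : 2*(S+ε)*ω*σ ≤ 2*(S+ε)*ω*τ := by nlinarith [hσ.2, mul_nonneg hSε.le hω0]
      nlinarith [mul_le_mul_of_nonneg_left hW' he₁0.le, hexpe, sq_nonneg (D σ)]
    have hsq : ∀ σ ∈ Set.Icc (0:ℝ) τ, D σ ≤ Real.sqrt (e₁*(2*(S+ε)*ω*τ)) := by
      intro σ hσ
      rw [← Real.sqrt_sq (x := D σ) dist_nonneg]
      exact Real.sqrt_le_sqrt (hWσ σ hσ)
    have hωs : ω ≤ Real.sqrt (e₁*(2*(S+ε)*ω*τ)) :=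
      csSup_le hne (by rintro _ ⟨σ, hσ, rfl⟩; exact hsq σ hσ)
    have hω2 : ω^2 ≤ e₁*(2*(S+ε)*ω*τ) := by
      have hnn : 0 ≤ e₁*(2*(S+ε)*ω*τ) := by positivity
      nlinarith [Real.sq_sqrt hnn, Real.sqrt_nonneg (e₁*(2*(S+ε)*ω*τ))]
    have hωb : ω ≤ 2*(S+ε)*e₁*τ := by
      rcases eq_or_lt_of_le hω0 with h0 | h0
      · rw [← h0]; positivity
      · have h4 : ω*ω ≤ (2*(S+ε)*e₁*τ)*ω := by nlinarith [hω2]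
        exact le_of_mul_le_mul_right h4 h0
    calc dist (u τ) (u 0) = D τ := rfl
      _ ≤ ω := hωD τ ⟨hτ0.le, le_rfl⟩
      _ ≤ _ := hωb
  -- iteration
  set c := (S+ε)*e₁ with hc
  have hcpos : 0 < c := by positivity
  set K : ℕ → ℝ := fun n => c * Real.exp (Real.log 2 * (1/2)^n) with hK
  have hKpos : ∀ n, 0 < K n := fun n => by positivity
  have hKgood : ∀ n, ∀ t ∈ Set.Icc (0:ℝ) r₁, dist (u t) (u 0) ≤ K n * t := by
    intro n
    induction n with
    | zero =>
        intro t ht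
        have hK0 : K 0 = 2*(S+ε)*e₁ := by
          simp only [hK, pow_zero, mul_one, Real.exp_log two_pos]; ring
        rw [hK0]; exact base t ht
    | succ n ih =>
        have hstep := step (K n) (hKpos n).le ih
        have hsqrt : Real.sqrt ((S+ε) * K n * e₁) = K (n+1) := by
          have hqq : Real.log 2 * (1/2:ℝ)^n
              = Real.log 2 * (1/2)^(n+1) + Real.log 2 * (1/2)^(n+1) := by
            rw [pow_succ]; ring
          have hX : (S+ε) * K n * e₁ = (K (n+1))^2 := by
            simp only [hK, hc]
            rw [hqq, Real.exp_add]
            ring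
          rw [hX, Real.sqrt_sq (hKpos (n+1)).le]
        rw [hsqrt] at hstep
        exact hstep
  intro t ht
  have hlim : Filter.Tendsto (fun n => K n * t) Filter.atTop (nhds (c * t)) := by
    have h1 : Filter.Tendsto (fun n : ℕ => ((1:ℝ)/2)^n) Filter.atTop (nhds 0) :=
      tendsto_pow_atTop_nhds_zero_of_lt_one (by norm_num) (by norm_num)
    have h2 : Filter.Tendsto (fun n : ℕ => Real.exp (Real.log 2 * (1/2:ℝ)^n))
        Filter.atTop (nhds 1) := by
      have h1' := h1.const_mul (Real.log 2)
      rw [mul_zero] at h1'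
      have h3 := (Real.continuous_exp.tendsto 0).comp h1'
      simpa [Function.comp_def] using h3
    have h4 := (h2.const_mul c).mul_const t
    simpa [hK, mul_one] using h4
  have hfin := ge_of_tendsto hlim (Filter.Eventually.of_forall (fun n => hKgood n t ht))
  calc dist (u t) (u 0) ≤ c * t := hfin
    _ = (S+ε)*Real.exp (-lam*r₁)*t := by rw [hc, he₁]

lemma globalSlopeBound (hlam : lam ≤ 0) (hbot : ∀ y, φ y ≠ ⊥)
    (hcont : ContinuousOn u (Set.Ici 0)) (hEVI : IsEVISolution φ lam u)
    (hu0 : metricSlope φ (u 0) ≠ ⊤) {y : X} (hy : φ y ≠ ⊤) :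
    (φ (u 0)).toReal - (φ y).toReal ≤
      (metricSlope φ (u 0)).toReal * dist (u 0) y + (-lam/2) * dist (u 0) y ^2 := by
  have hψtop : φ (u 0) ≠ ⊤ := phi_ne_top_of_slope hu0
  set S := (metricSlope φ (u 0)).toReal with hSdef
  have hS0 : 0 ≤ S := slope_toReal_nonneg
  set d₀ := dist (u 0) y with hd₀
  have hd₀0 : 0 ≤ d₀ := dist_nonneg
  set ψ0 := (φ (u 0)).toReal with hψ0
  set vV := (φ y).toReal with hvV
  set c₀ := vV - ψ0 with hc₀
  have main : ∀ ε > (0:ℝ),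
      ψ0 - vV ≤ -(lam/2)*d₀^2 + d₀*(S+ε)*Real.exp (-lam*ε)
        + |c₀| * (1 - Real.exp (lam*ε)) := by
    intro ε hε
    obtain ⟨r₁, hr₁, hr₁ε, hspeed, hslope⟩ := locSpeed hlam hbot hcont hEVI hu0 hε
    rw [← hSdef] at hspeed hslope
    set c := (S+ε)*Real.exp (-lam*r₁) with hc
    have hc0 : 0 < c := mul_pos (by linarith) (Real.exp_pos _)
    set K₂ := (S+ε)*c with hK₂
    have hK₂0 : 0 < K₂ := mul_pos (by linarith) hc0
    set M := max c₀ (c₀ * Real.exp (lam*r₁)) with hM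
    have key : ∀ τ ∈ Set.Ioc (0:ℝ) r₁,
        Real.exp (lam*τ) * dist (u τ) y^2 ≤ d₀^2 + 2*(M*τ + K₂*τ^2/2) := by
      intro τ hτ
      have hW := gronW hbot hcont hEVI (ν := lam) le_rfl hy (le_refl (0:ℝ)) hτ.1.le
        (h := fun t => ψ0 - K₂*t)
        (H := fun t => M*t + K₂*t^2/2) (H' := fun t => M + K₂*t)
        (by
          intro t ht
          show ψ0 - K₂*t ≤ (φ (u t)).toReal
          have htr : t ∈ Set.Icc (0:ℝ) r₁ := ⟨ht.1.le, le_trans ht.2.le hτ.2⟩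
          have h1 := hslope t htr
          have h2 := hspeed t htr
          have h3 : (S+ε) * dist (u t) (u 0) ≤ (S+ε)*(c*t) := by
            apply mul_le_mul_of_nonneg_left _ (by linarith)
            calc dist (u t) (u 0) ≤ (S+ε)*Real.exp (-lam*r₁)*t := h2
              _ = c*t := by rw [hc]
          have h4 : (S+ε)*(c*t) = K₂*t := by rw [hK₂]; ring
          linarith
          )
        (by
          intro t
          have hp : HasDerivAt (fun t:ℝ => K₂*t^2/2) (K₂*t) t := by
            have h5 : (fun t:ℝ => K₂*t^2/2) = fun t => (K₂/2)*t^2 := by funext t; ring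
            rw [h5]
            have := (hasDerivAt_pow 2 t).const_mul (K₂/2)
            refine this.congr_deriv ?_; symm
            simp; ring
          have hm : HasDerivAt (fun t:ℝ => M*t) M t := by
            simpa using (hasDerivAt_id t).const_mul M
          exact hm.add hp)
        (by
          intro t ht
          show Real.exp (lam*t) * (vV - (ψ0 - K₂*t)) ≤ M + K₂*t
          have hexp1 : Real.exp (lam*t) ≤ 1 := Real.exp_le_one_iff.2 (by nlinarith [ht.1])
          have heq : Real.exp (lam*t) * (vV - (ψ0 - K₂*t))
              = Real.exp (lam*t)*c₀ + Real.exp (lam*t)*(K₂*t) := by rw [hc₀]; ring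
          rw [heq]
          have hMb : Real.exp (lam*t)*c₀ ≤ M := by
            rcases le_or_gt 0 c₀ with h0 | h0
            · calc Real.exp (lam*t)*c₀ ≤ 1*c₀ := mul_le_mul_of_nonneg_right hexp1 h0
                _ = c₀ := by ring
                _ ≤ M := le_max_left _ _
            · have hle : Real.exp (lam*r₁) ≤ Real.exp (lam*t) := by
                apply Real.exp_le_exp.2
                nlinarith [ht.2, hτ.2]
              calc Real.exp (lam*t)*c₀ ≤ Real.exp (lam*r₁)*c₀ := by nlinarith
                _ = c₀ * Real.exp (lam*r₁) := by ring
                _ ≤ M := le_max_right _ _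
          have hKb : Real.exp (lam*t)*(K₂*t) ≤ K₂*t := by
            nlinarith [Real.exp_pos (lam*t), mul_nonneg hK₂0.le ht.1]
          linarith)
      have h6 : Real.exp (lam*0) * dist (u 0) y ^2 = d₀^2 := by
        rw [mul_zero, Real.exp_zero, one_mul]
      have h7 : (M*τ + K₂*τ^2/2) - (M*0 + K₂*0^2/2) = M*τ + K₂*τ^2/2 := by ring
      calc Real.exp (lam*τ) * dist (u τ) y^2
          ≤ Real.exp (lam*0) * dist (u 0) y ^2
            + 2*((M*τ + K₂*τ^2/2) - (M*0 + K₂*0^2/2)) := hW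
        _ = d₀^2 + 2*(M*τ + K₂*τ^2/2) := by rw [h6, h7]
    -- positivity of the limit functional
    set F : ℝ → ℝ := fun τ => M + K₂*τ/2
        - dist (u τ) y^2 * ((Real.exp (lam*τ) - 1)/(2*τ))
        + (d₀ + dist (u τ) y)*c/2 with hF
    have hF0 : ∀ τ ∈ Set.Ioc (0:ℝ) r₁, 0 ≤ F τ := by
      intro τ hτ
      have hkey := key τ hτ
      have habs : |dist (u τ) y - d₀| ≤ dist (u τ) (u 0) := abs_dist_sub_le (u τ) (u 0) y
      have hsp := hspeed τ ⟨hτ.1.le, hτ.2⟩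
      have h2τ : 0 < 2*τ := by linarith [hτ.1]
      have h1 : (Real.exp (lam*τ) - 1) * dist (u τ) y^2
          ≤ 2*M*τ + K₂*τ^2 + c*τ*(d₀ + dist (u τ) y) := by
        have hcτ : dist (u τ) (u 0) ≤ c*τ := by
          calc dist (u τ) (u 0) ≤ (S+ε)*Real.exp (-lam*r₁)*τ := hsp
            _ = c*τ := by rw [hc]
        have habs' : d₀ - dist (u τ) y ≤ c*τ := by
          have := abs_le.1 habs
          linarith [this.1, hcτ]
        have hdist0 : 0 ≤ d₀ + dist (u τ) y := by positivity
        nlinarith [hkey, mul_le_mul_of_nonneg_right habs' hdist0]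
      have h8 : dist (u τ) y^2 * ((Real.exp (lam*τ) - 1)/(2*τ))
          ≤ M + K₂*τ/2 + (d₀ + dist (u τ) y)*c/2 := by
        rw [mul_div_assoc', div_le_iff₀ h2τ]
        nlinarith [h1]
      simp only [hF]
      linarith
    have hdist_t : Filter.Tendsto (fun τ => dist (u τ) y)
        (nhdsWithin 0 (Set.Ioi 0)) (nhds d₀) := by
      have hg0 : ContinuousWithinAt (fun t => dist (u t) y) (Set.Ici 0) 0 :=
        ((continuous_id.dist continuous_const).continuousAt).comp_continuousWithinAt
          (hcont 0 (Set.mem_Ici.2 le_rfl))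
      exact hg0.tendsto.mono_left (nhdsWithin_mono 0 (fun z hz => Set.mem_Ici.2 (le_of_lt hz)))
    have hslope_exp : Filter.Tendsto (fun τ => (Real.exp (lam*τ) - 1)/(2*τ))
        (nhdsWithin 0 (Set.Ioi 0)) (nhds (lam/2)) := by
      have hder : HasDerivAt (fun t => Real.exp (lam*t)) lam 0 := by
        have := (Real.hasDerivAt_exp (lam*0)).comp 0 ((hasDerivAt_id 0).const_mul lam)
        simpa [Function.comp_def, mul_comm] using this
      have := hasDerivAt_iff_tendsto_slope.1 hder
      have h9 : Filter.Tendsto (slope (fun t => Real.exp (lam*t)) 0)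
          (nhdsWithin 0 (Set.Ioi 0)) (nhds lam) :=
        this.mono_left (nhdsWithin_mono 0 (fun z hz => ne_of_gt hz))
      have h10 := h9.div_const 2
      apply h10.congr'
      filter_upwards [eventually_mem_nhdsWithin] with τ hτ
      rw [slope_def_field]
      rw [mul_comm lam τ]  -- careful
      field_simp
      simp only [mul_zero, zero_mul, Real.exp_zero]
      ring
    have hFlim : Filter.Tendsto F (nhdsWithin 0 (Set.Ioi 0))
        (nhds (M - d₀^2*(lam/2) + (d₀ + d₀)*c/2)) := by
      have ha' : Filter.Tendsto (fun τ:ℝ => M + K₂*τ/2) (nhdsWithin 0 (Set.Ioi 0))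
          (nhds (M + K₂*0/2)) := by
        apply Filter.Tendsto.const_add
        exact ((continuous_const.mul continuous_id).div_const 2).continuousAt.tendsto.mono_left
          nhdsWithin_le_nhds
      have hb' := ((hdist_t.pow 2).mul hslope_exp)
      have hcc' := ((hdist_t.const_add d₀).mul_const c).div_const 2
      have := (ha'.sub hb').add hcc'
      simpa [hF, mul_zero, zero_div, add_zero] using this
    have hL : 0 ≤ M - d₀^2*(lam/2) + (d₀ + d₀)*c/2 :=
      ge_of_tendsto hFlim (by
        filter_upwards [Ioc_mem_nhdsGT_of_mem ⟨le_rfl, hr₁⟩] with τ hτ using hF0 τ hτ)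
    have hMle : M ≤ c₀ + |c₀| * (1 - Real.exp (lam*r₁)) := by
      rcases le_or_gt 0 c₀ with h0 | h0
      · have hexp1 : Real.exp (lam*r₁) ≤ 1 := Real.exp_le_one_iff.2 (by nlinarith)
        have : c₀ * Real.exp (lam*r₁) ≤ c₀ := by nlinarith
        have hmax : M = c₀ := max_eq_left this
        rw [hmax, abs_of_nonneg h0]
        nlinarith
      · have hexp1 : Real.exp (lam*r₁) ≤ 1 := Real.exp_le_one_iff.2 (by nlinarith)
        have : c₀ ≤ c₀ * Real.exp (lam*r₁) := by nlinarith [Real.exp_pos (lam*r₁)]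
        have hmax : M = c₀ * Real.exp (lam*r₁) := max_eq_right this
        rw [hmax, abs_of_neg h0]
        nlinarith
    -- monotonicity in r₁ ≤ ε
    have hcε : c ≤ (S+ε)*Real.exp (-lam*ε) := by
      rw [hc]
      apply mul_le_mul_of_nonneg_left _ (by linarith)
      apply Real.exp_le_exp.2
      nlinarith
    have hexpmon : 1 - Real.exp (lam*r₁) ≤ 1 - Real.exp (lam*ε) := by
      have : Real.exp (lam*ε) ≤ Real.exp (lam*r₁) := Real.exp_le_exp.2 (by nlinarith)
      linarith
    have habs0 : 0 ≤ |c₀| := abs_nonneg _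
    have hd₀c : d₀ * c ≤ d₀*((S+ε)*Real.exp (-lam*ε)) := mul_le_mul_of_nonneg_left hcε hd₀0
    have : ψ0 - vV ≤ -(lam/2)*d₀^2 + d₀*c + |c₀| * (1 - Real.exp (lam*r₁)) := by
      rw [hc₀] at hMle ⊢
      nlinarith [hL, hMle]
    calc ψ0 - vV ≤ -(lam/2)*d₀^2 + d₀*c + |c₀| * (1 - Real.exp (lam*r₁)) := this
      _ ≤ -(lam/2)*d₀^2 + d₀*(S+ε)*Real.exp (-lam*ε) + |c₀| * (1 - Real.exp (lam*ε)) := by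
          have := mul_le_mul_of_nonneg_left hexpmon habs0
          rw [mul_assoc]
          nlinarith [hd₀c]
  -- let ε → 0
  have hRHSlim : Filter.Tendsto
      (fun ε => -(lam/2)*d₀^2 + d₀*(S+ε)*Real.exp (-lam*ε) + |c₀| * (1 - Real.exp (lam*ε)))
      (nhdsWithin 0 (Set.Ioi 0)) (nhds (-(lam/2)*d₀^2 + d₀*S*1 + |c₀| * (1 - 1))) := by
    apply Filter.Tendsto.mono_left _ nhdsWithin_le_nhds
    apply Filter.Tendsto.add
    · apply Filter.Tendsto.const_add
      have h1 : Continuous (fun ε : ℝ => d₀*(S+ε)*Real.exp (-lam*ε)) := by fun_prop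
      have := h1.tendsto 0
      simpa using this
    · have h2 : Continuous (fun ε : ℝ => |c₀| * (1 - Real.exp (lam*ε))) := by fun_prop
      have := h2.tendsto 0
      simpa using this
  have hfinal := ge_of_tendsto hRHSlim (by
    filter_upwards [eventually_mem_nhdsWithin] with ε hε using main ε hε)
  have : ψ0 - vV ≤ -(lam/2)*d₀^2 + d₀*S*1 + |c₀| * (1-1) := hfinal
  nlinarith [this]

lemma globalSpeed (hlam : lam ≤ 0) (hbot : ∀ y, φ y ≠ ⊥)
    (hcont : ContinuousOn u (Set.Ici 0)) (hEVI : IsEVISolution φ lam u)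
    (hu0 : metricSlope φ (u 0) ≠ ⊤) {b : ℝ} (hb : 0 < b) :
    dist (u b) (u 0) ≤ (metricSlope φ (u 0)).toReal * Elam (-lam) b := by
  have hψtop : φ (u 0) ≠ ⊤ := phi_ne_top_of_slope hu0
  set S := (metricSlope φ (u 0)).toReal with hSdef
  have hS0 : 0 ≤ S := slope_toReal_nonneg
  have hmu : 0 ≤ -lam := by linarith
  set g : ℝ → ℝ := fun t => dist (u t) (u 0)^2 with hg
  have key : ∀ α ∈ Set.Ioo (0:ℝ) b, ∀ ε > (0:ℝ),
      dist (u b) (u 0) ≤ (dist (u α) (u 0) + ε) * Real.exp (-lam*b)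
        + (S+ε)*Elam (-lam) b := by
    intro α hα ε hε
    set dα := dist (u α) (u 0) with hdα
    have hdα0 : 0 ≤ dα := dist_nonneg
    set ρ : ℝ → ℝ := fun t => (dα + ε) * Real.exp (-lam*(t-α))
        + (S+ε) * Elam (-lam) (t-α) with hρ
    have hρpos : ∀ t, α ≤ t → 0 < ρ t := by
      intro t ht
      have h1 : 0 < (dα + ε) * Real.exp (-lam*(t-α)) := by positivity
      have h2 : 0 ≤ (S+ε) * Elam (-lam) (t-α) :=
        mul_nonneg (by linarith) (Elam_nonneg (by linarith))
      simp only [hρ]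
      linarith
    have hρd : ∀ t, HasDerivAt ρ ((S+ε) + (-lam) * ρ t) t := by
      intro t
      have h1 : HasDerivAt (fun t:ℝ => -lam*(t-α)) (-lam) t := by
        simpa using ((hasDerivAt_id t).sub_const α).const_mul (-lam)
      have he : HasDerivAt (fun t => Real.exp (-lam*(t-α)))
          (-lam * Real.exp (-lam*(t-α))) t := by
        have := (Real.hasDerivAt_exp (-lam*(t-α))).comp t h1
        simpa [Function.comp_def, mul_comm] using this
      have hEl : HasDerivAt (fun t => Elam (-lam) (t-α)) (Real.exp (-lam*(t-α))) t := by
        have := (hasDerivAt_Elam (-lam) (t-α)).comp t ((hasDerivAt_id t).sub_const α)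
        simpa [Function.comp_def] using this
      have hsum := (he.const_mul (dα + ε)).add (hEl.const_mul (S+ε))
      refine hsum.congr_deriv ?_; symm
      simp only [hρ]
      linear_combination (S+ε) * mul_Elam (-lam) (t-α)
    set B : ℝ → ℝ := fun t => ρ t^2 with hB
    set B' : ℝ → ℝ := fun t => 2*ρ t*((S+ε) + (-lam)*ρ t) with hB'
    have hBd : ∀ t, HasDerivAt B (B' t) t := by
      intro t
      have := (hρd t).pow 2
      refine this.congr_deriv ?_; symm
      simp only [hB']
      ring
    set f' : ℝ → ℝ := fun x => 2*((φ (u 0)).toReal - (φ (u x)).toReal) - lam * g x with hf'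
    have hsub : Set.Icc α b ⊆ Set.Ici (0:ℝ) := fun x hx => le_trans hα.1.le hx.1
    have cont : ContinuousOn g (Set.Icc α b) :=
      (((continuous_id.dist continuous_const).comp_continuousOn (hcont.mono hsub)).pow 2)
    have hf'cond : ∀ x ∈ Set.Ico α b, ∀ r, f' x < r →
        ∃ᶠ z in nhdsWithin x (Set.Ioi x), slope g x z < r := by
      intro x hx r hr
      exact dini_bound hbot hEVI hψtop (lt_of_lt_of_le hα.1 hx.1) hr
    have haB : g α ≤ B α := by
      have hρα : ρ α = dα + ε := by
        simp [hρ, Elam_zero]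
      simp only [hB, hρα, hg]
      nlinarith [hdα0]
    have bound : ∀ x ∈ Set.Ico α b, g x = B x → f' x < B' x := by
      intro x hx hfB
      have hx0 : 0 < x := lt_of_lt_of_le hα.1 hx.1
      have hIIa := globalSlopeBound hlam hbot hcont hEVI hu0 (hEVI.2.1 x hx0)
      rw [dist_comm (u 0) (u x)] at hIIa
      rw [← hSdef] at hIIa
      have hρx : 0 < ρ x := hρpos x hx.1
      have hdeq : dist (u x) (u 0) = ρ x := by
        have h := congrArg Real.sqrt hfB
        rwa [show g x = dist (u x) (u 0)^2 from rfl, show B x = ρ x ^2 from rfl,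
          Real.sqrt_sq dist_nonneg, Real.sqrt_sq hρx.le] at h
      show 2*((φ (u 0)).toReal - (φ (u x)).toReal) - lam * g x < 2*ρ x*((S+ε) + (-lam)*ρ x)
      have hgx : g x = ρ x^2 := hfB
      rw [hdeq] at hIIa
      rw [hgx]
      have hρx' := hρx
      generalize hR : ρ x = R at hIIa hρx' ⊢
      nlinarith [mul_pos hρx' hε, mul_nonneg hmu (sq_nonneg R), hIIa]
    have main := image_le_of_liminf_slope_right_lt_deriv_boundary cont hf'cond haB hBd bound
    have hgb : g b ≤ B b := main (right_mem_Icc.2 hα.2.le)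
    have hdb : dist (u b) (u 0) ≤ ρ b := by
      have h := Real.sqrt_le_sqrt hgb
      rwa [show g b = dist (u b) (u 0)^2 from rfl, show B b = ρ b ^2 from rfl,
        Real.sqrt_sq dist_nonneg, Real.sqrt_sq (hρpos b hα.2.le).le] at h
    have hρbd : ρ b ≤ (dα + ε) * Real.exp (-lam*b) + (S+ε)*Elam (-lam) b := by
      simp only [hρ]
      have h1 : Real.exp (-lam*(b-α)) ≤ Real.exp (-lam*b) :=
        Real.exp_le_exp.2 (by nlinarith [hα.1])
      have h2 : Elam (-lam) (b-α) ≤ Elam (-lam) b := Elam_mono hmu (by linarith [hα.1])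
      have h3 : (dα + ε) * Real.exp (-lam*(b-α)) ≤ (dα + ε) * Real.exp (-lam*b) :=
        mul_le_mul_of_nonneg_left h1 (by linarith)
      have h4 : (S+ε) * Elam (-lam) (b-α) ≤ (S+ε) * Elam (-lam) b :=
        mul_le_mul_of_nonneg_left h2 (by linarith)
      linarith
    linarith
  -- take α = ε = s → 0⁺
  have hdist_t : Filter.Tendsto (fun s => dist (u s) (u 0))
      (nhdsWithin 0 (Set.Ioi 0)) (nhds 0) := by
    have hg0 : ContinuousWithinAt (fun t => dist (u t) (u 0)) (Set.Ici 0) 0 :=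
      ((continuous_id.dist continuous_const).continuousAt).comp_continuousWithinAt
        (hcont 0 (Set.mem_Ici.2 le_rfl))
    have := hg0.tendsto.mono_left (nhdsWithin_mono 0 (fun z (hz : z ∈ Set.Ioi 0) => le_of_lt hz))
    simpa using this
  have hlim : Filter.Tendsto
      (fun s => (dist (u s) (u 0) + s) * Real.exp (-lam*b) + (S+s)*Elam (-lam) b)
      (nhdsWithin 0 (Set.Ioi 0)) (nhds ((0+0) * Real.exp (-lam*b) + (S+0)*Elam (-lam) b)) := by
    have hid : Filter.Tendsto (fun s : ℝ => s) (nhdsWithin 0 (Set.Ioi 0)) (nhds 0) :=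
      tendsto_id.mono_left nhdsWithin_le_nhds
    exact ((hdist_t.add hid).mul_const _).add ((tendsto_const_nhds.add hid).mul_const _)
  have := ge_of_tendsto hlim (by
    filter_upwards [Ioo_mem_nhdsGT_of_mem ⟨le_rfl, hb⟩] with s hs using
      key s hs s hs.1)
  calc dist (u b) (u 0) ≤ (0+0) * Real.exp (-lam*b) + (S+0)*Elam (-lam) b := this
    _ = S * Elam (-lam) b := by ring

lemma dissipation (hlam : lam ≤ 0) (hbot : ∀ y, φ y ≠ ⊥)
    (hcont : ContinuousOn u (Set.Ici 0)) (hEVI : IsEVISolution φ lam u)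
    (hu0 : metricSlope φ (u 0) ≠ ⊤) {r : ℝ} (hr : 0 < r) :
    (φ (u 0)).toReal - (φ (u r)).toReal ≤
      (metricSlope φ (u 0)).toReal^2 * (r * Real.exp (2*(-lam)*r)) := by
  set S := (metricSlope φ (u 0)).toReal with hSdef
  have hS0 : 0 ≤ S := slope_toReal_nonneg
  have hmu : 0 ≤ -lam := by linarith
  have hIIa := globalSlopeBound hlam hbot hcont hEVI hu0 (hEVI.2.1 r hr)
  rw [dist_comm (u 0) (u r), ← hSdef] at hIIa
  have hsp := globalSpeed hlam hbot hcont hEVI hu0 hr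
  rw [← hSdef] at hsp
  set D := dist (u r) (u 0) with hD
  have hD0 : (0:ℝ) ≤ D := dist_nonneg
  set E := Elam (-lam) r with hE
  have hE0 : 0 ≤ E := Elam_nonneg hr.le
  have h3 := Elam_sq_ineq hmu hr.le
  rw [← hE] at h3
  have hS2 : (0:ℝ) ≤ S^2 := sq_nonneg S
  have h2 : D^2 ≤ (S*E)^2 := by nlinarith [hD0, hsp, mul_nonneg hS0 hE0]
  have h4 : (-lam/2)*D^2 ≤ (-lam/2)*(S*E)^2 := mul_le_mul_of_nonneg_left h2 (by linarith)
  have h1 : S*D ≤ S*(S*E) := mul_le_mul_of_nonneg_left hsp hS0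
  have h5 : S^2*(E + (-lam)/2*E^2) ≤ S^2*(r*Real.exp (2*(-lam)*r)) :=
    mul_le_mul_of_nonneg_left h3 hS2
  nlinarith [hIIa, h1, h4, h5]

lemma main_real (hlam : lam ≤ 0) (hbot : ∀ y, φ y ≠ ⊥)
    (hcont : ContinuousOn u (Set.Ici 0)) (hEVI : IsEVISolution φ lam u)
    (hu0 : metricSlope φ (u 0) ≠ ⊤) {v : X} (hv : φ v ≠ ⊤) {t : ℝ} (ht : 0 ≤ t) :
    Real.exp (2*lam*t)/2 * dist (u t) v ^2 - 1/2 * dist (u 0) v ^2 ≤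
      Elam (2*lam) t * ((φ v).toReal - (φ (u 0)).toReal)
        + t^2/2 * (metricSlope φ (u 0)).toReal^2 := by
  set S := (metricSlope φ (u 0)).toReal with hSdef
  have hS0 : 0 ≤ S := slope_toReal_nonneg
  set ψ0 := (φ (u 0)).toReal with hψ0
  set vV := (φ v).toReal with hvV
  have h2lam : 2*lam ≤ lam := by linarith
  have hW := gronW hbot hcont hEVI (ν := 2*lam) h2lam hv (le_refl (0:ℝ)) ht
    (h := fun r => ψ0 - S^2*(r*Real.exp (2*(-lam)*r)))
    (H := fun r => Elam (2*lam) r * (vV - ψ0) + S^2*r^2/2)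
    (H' := fun r => Real.exp (2*lam*r) * (vV - ψ0) + S^2*r)
    (by
      intro r hr
      show ψ0 - S^2*(r*Real.exp (2*(-lam)*r)) ≤ (φ (u r)).toReal
      have := dissipation hlam hbot hcont hEVI hu0 hr.1
      rw [← hSdef] at this
      linarith)
    (by
      intro r
      have hp : HasDerivAt (fun r:ℝ => S^2*r^2/2) (S^2*r) r := by
        have h5 : (fun r:ℝ => S^2*r^2/2) = fun r => (S^2/2)*r^2 := by funext r; ring
        rw [h5]
        have := (hasDerivAt_pow 2 r).const_mul (S^2/2)
        refine this.congr_deriv ?_; symm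
        simp; ring
      exact ((hasDerivAt_Elam (2*lam) r).mul_const (vV - ψ0)).add hp)
    (by
      intro r hr
      show Real.exp (2*lam*r) * (vV - (ψ0 - S^2*(r*Real.exp (2*(-lam)*r))))
          ≤ Real.exp (2*lam*r) * (vV - ψ0) + S^2*r
      have hprod : Real.exp (2*lam*r) * Real.exp (2*(-lam)*r) = 1 := by
        rw [← Real.exp_add]
        norm_num
      apply le_of_eq
      linear_combination (S^2*r) * hprod)
  have hH0 : Elam (2*lam) 0 * (vV - ψ0) + S^2*0^2/2 = 0 := by
    rw [Elam_zero]; ring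
  have hHt : Real.exp (2*lam*0) * dist (u 0) v^2 = dist (u 0) v^2 := by
    rw [mul_zero, Real.exp_zero, one_mul]
  rw [hHt] at hW
  nlinarith [hW, hH0]

end Aux

theorem stmt12 {X : Type*} [MetricSpace X] (φ : X → EReal) (lam : ℝ) (hlam : lam ≤ 0)
    (hbot : ∀ y, φ y ≠ ⊥) (hproper : ∃ y, φ y ≠ ⊤) (hlsc : LowerSemicontinuous φ)
    (u : ℝ → X) (hcont : ContinuousOn u (Set.Ici 0)) (hEVI : IsEVISolution φ lam u)
    (hu0 : metricSlope φ (u 0) ≠ ⊤) :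
    ∀ v : X, φ v ≠ ⊤ → ∀ t : ℝ, 0 ≤ t →
      ((Real.exp (2 * lam * t) / 2 * dist (u t) v ^ 2
          - 1 / 2 * dist (u 0) v ^ 2 : ℝ) : EReal) ≤
        ((Elam (2 * lam) t : ℝ) : EReal) * (φ v - φ (u 0)) +
          ((t ^ 2 / 2 : ℝ) : EReal) * (metricSlope φ (u 0)) ^ 2 := by
  intro v hv t ht
  have hψtop : φ (u 0) ≠ ⊤ := phi_ne_top_of_slope hu0
  have hφv : φ v = (((φ v).toReal : ℝ) : EReal) := (EReal.coe_toReal hv (hbot v)).symm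
  have hφ0 : φ (u 0) = (((φ (u 0)).toReal : ℝ) : EReal) :=
    (EReal.coe_toReal hψtop (hbot (u 0))).symm
  have hslope : metricSlope φ (u 0) = (((metricSlope φ (u 0)).toReal : ℝ) : EReal) :=
    (EReal.coe_toReal hu0 slope_ne_bot).symm
  rw [hφv, hφ0, hslope, ← EReal.coe_sub, ← EReal.coe_pow, ← EReal.coe_mul, ← EReal.coe_mul,
    ← EReal.coe_add, EReal.coe_le_coe_iff]
  have hmain := main_real hlam hbot hcont hEVI hu0 hv ht
  linarith [hmain]
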